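/- Suppose each Sₜ : ℝⁿ → ℝ ∪ {+∞} satisfies mₜ := inf_{x ∈ ℝⁿ} Sₜ(x) > −∞ and Sₜ(0) = 0, and 0 ∈ Dₜ. Then every c in ⋂_{α>0} αC, where C is the hedgeable-claims set, satisfies c ≤ 0 componentwise; in particular (⋂_{α>0} αC) ∩ M₊ = {0} (no scalable arbitrage). -/

import Mathlib

open scoped Pointwise

/-- The set of claim processes superhedgeable at zero cost (see paper, Section 3). -/
def hedgeSet {n T : ℕ} (S : Fin (T+1) → EuclideanSpace ℝ (Fin n) → EReal)
    (D : Fin (T+1) → Set (EuclideanSpace ℝ (Fin n))) : Set (Fin (T+1) → ℝ) :=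
  {c | ∃ x : ℕ → EuclideanSpace ℝ (Fin n), x T = 0 ∧
    ∀ t : Fin (T+1), x t ∈ D t ∧
      S t (x t - (if (t : ℕ) = 0 then 0 else x ((t : ℕ) - 1))) + ((c t : ℝ) : EReal) ≤ 0}

/-- If each cost function `Sₜ` is bounded below (`inf_x Sₜ(x) > -∞`) with
`Sₜ(0) = 0` and `0 ∈ Dₜ`, then every claim `c` in `⋂_{α>0} α C` is componentwise
nonpositive; in particular `(⋂_{α>0} α C) ∩ M₊ = {0}` (no scalable arbitrage). -/
theorem stmt_12 (n T : ℕ) (S : Fin (T+1) → EuclideanSpace ℝ (Fin n) → EReal)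
    (D : Fin (T+1) → Set (EuclideanSpace ℝ (Fin n)))
    (hbdd : ∀ t, ∃ m : ℝ, ∀ x, ((m : ℝ) : EReal) ≤ S t x)
    (hS0 : ∀ t, S t 0 = 0)
    (hD0 : ∀ t, (0 : EuclideanSpace ℝ (Fin n)) ∈ D t) :
    (∀ c ∈ ⋂ α ∈ Set.Ioi (0:ℝ), α • hedgeSet S D, ∀ t : Fin (T+1), c t ≤ 0) ∧
    (⋂ α ∈ Set.Ioi (0:ℝ), α • hedgeSet S D) ∩ {c : Fin (T+1) → ℝ | ∀ t, 0 ≤ c t} = {0} := by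
  have key : ∀ c ∈ ⋂ α ∈ Set.Ioi (0:ℝ), α • hedgeSet S D, ∀ t : Fin (T+1), c t ≤ 0 := by
    intro c hc t
    obtain ⟨m, hm⟩ := hbdd t
    -- m ≤ 0
    have hm0 : m ≤ 0 := by
      have := hm 0
      rw [hS0 t] at this
      exact_mod_cast this
    -- For each α > 0, c t ≤ α * (-m)
    have hbound : ∀ α : ℝ, 0 < α → c t ≤ α * (-m) := by
      intro α hα
      have hc' : c ∈ α • hedgeSet S D := by
        have := Set.mem_iInter₂.mp hc α hα
        exact this
      obtain ⟨c', hc'mem, rfl⟩ := hc'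
      obtain ⟨x, -, hx⟩ := hc'mem
      have h1 := (hx t).2
      have h2 : ((m + c' t : ℝ) : EReal) ≤ 0 := by
        push_cast
        calc ((m : ℝ) : EReal) + ((c' t : ℝ) : EReal)
            ≤ S t (x t - (if (t : ℕ) = 0 then 0 else x ((t : ℕ) - 1))) + ((c' t : ℝ) : EReal) :=
              add_le_add (hm _) (le_refl _)
          _ ≤ 0 := h1
      have h3 : m + c' t ≤ 0 := by exact_mod_cast h2
      have h4 : c' t ≤ -m := by linarith
      show α * c' t ≤ α * (-m)
      exact mul_le_mul_of_nonneg_left h4 hα.le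
    -- Let α → 0
    by_contra h
    push_neg at h
    have hα : (0:ℝ) < c t / (-m + 1) := by
      apply div_pos h
      linarith
    have := hbound _ hα
    rw [div_mul_eq_mul_div] at this
    rw [le_div_iff₀ (by linarith : (0:ℝ) < -m + 1)] at this
    nlinarith
  refine ⟨key, ?_⟩
  ext c
  simp only [Set.mem_inter_iff, Set.mem_setOf_eq, Set.mem_singleton_iff]
  constructor
  · rintro ⟨hc, hpos⟩
    funext t
    exact le_antisymm (key c hc t) (hpos t)
  · rintro rfl
    constructor
    · apply Set.mem_iInter₂.mpr
      intro α hα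
      refine ⟨0, ?_, smul_zero α⟩
      refine ⟨fun _ => 0, rfl, fun t => ⟨hD0 t, ?_⟩⟩
      simp [hS0 t]
    · intro t; exact le_refl 0
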